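/- arXiv:2511.13631 — 3 statements merged into one kernel-verified Lean document; each statement's English description precedes it below -/
import Mathlib

section
/- Let R be a commutative ring, let t and r be units of R, and let s ∈ R satisfy s² = s·(r − t). Let M be an R-module, and define binary operations on M by x ◁ y = t•x + s•y and x ▷ y = r•x. Then (M, ◁, ▷) is a framed birack; that is: (i) (x◁x)▷(x▷x) = (x▷x)◁(x◁x) for all x ∈ M; (ii) for each x ∈ M the maps y ↦ y▷x and y ↦ y◁x are bijections of M, and the map S : M×M → M×M given by S(x,y) = (y▷x, x◁y) is a bijection; (iii) for all x, y, z ∈ M the exchange laws (x◁y)◁(z◁y) = (x◁z)◁(y▷z), (x◁y)▷(z◁y) = (x▷z)◁(y▷z), and (x▷y)▷(z▷y) = (x▷z)▷(y◁z) hold. -/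
/-- The `(t,s,r)`-birack structure on an `R`-module `M`, where `t, r` are units of the
commutative ring `R` and `s² = s(r - t)`, given by `x ◁ y = t•x + s•y` and `x ▷ y = r•x`,
is a framed birack: it satisfies (i) `(x◁x)▷(x▷x) = (x▷x)◁(x◁x)`; (ii) the maps
`y ↦ y▷x`, `y ↦ y◁x` and `S(x,y) = (y▷x, x◁y)` are bijections; (iii) the three
exchange laws. -/
theorem statement1 {R M : Type*} [CommRing R] [AddCommGroup M] [Module R M]
    (t r : Rˣ) (s : R) (hs : s ^ 2 = s * ((r : R) - (t : R))) :
    let und : M → M → M := fun x y => (t : R) • x + s • y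
    let ov : M → M → M := fun x y => (r : R) • x
    -- (i)
    (∀ x : M, ov (und x x) (ov x x) = und (ov x x) (und x x)) ∧
    -- (ii)
    (∀ x : M, Function.Bijective (fun y : M => ov y x)) ∧
    (∀ x : M, Function.Bijective (fun y : M => und y x)) ∧
    Function.Bijective (fun p : M × M => (ov p.2 p.1, und p.1 p.2)) ∧
    -- (iii) exchange laws
    (∀ x y z : M, und (und x y) (und z y) = und (und x z) (ov y z)) ∧
    (∀ x y z : M, ov (und x y) (und z y) = und (ov x z) (ov y z)) ∧
    (∀ x y z : M, ov (ov x y) (ov z y) = ov (ov x z) (und y z)) := by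
  intro und ov
  refine ⟨?_, ?_, ?_, ?_, ?_, ?_, ?_⟩
  · intro x
    show (r : R) • ((t : R) • x + s • x) = (t : R) • ((r : R) • x) + s • ((t : R) • x + s • x)
    match_scalars <;> first | ring1 | (linear_combination hs) | (linear_combination -hs)
  · intro x
    refine Function.bijective_iff_has_inverse.mpr ⟨fun y => (↑r⁻¹ : R) • y, ?_, ?_⟩ <;>
      intro y <;> simp [ov, smul_smul]
  · intro x
    refine Function.bijective_iff_has_inverse.mpr
      ⟨fun y => (↑t⁻¹ : R) • (y - s • x), ?_, ?_⟩ <;> intro y <;>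
      simp [und, smul_sub, smul_smul] <;> abel
  · refine Function.bijective_iff_has_inverse.mpr
      ⟨fun p => ((↑t⁻¹ : R) • (p.2 - s • ((↑r⁻¹ : R) • p.1)), (↑r⁻¹ : R) • p.1), ?_, ?_⟩ <;>
      rintro ⟨a, b⟩ <;> simp [und, ov, smul_sub, smul_smul] <;> abel
  · intro x y z
    show (t : R) • ((t : R) • x + s • y) + s • ((t : R) • z + s • y)
        = (t : R) • ((t : R) • x + s • z) + s • ((r : R) • y)
    match_scalars <;> first | ring1 | (linear_combination hs) | (linear_combination -hs)
  · intro x y z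
    show (r : R) • ((t : R) • x + s • y) = (t : R) • ((r : R) • x) + s • ((r : R) • y)
    match_scalars <;> ring
  · intro x y z
    rfl
end

section
/- Let R be a commutative ring, let t and r be units of R, and let s ∈ R satisfy s² = s·(r − t). Let M be an R-module with operations x ◁ y = t•x + s•y and x ▷ y = r•x. Then for all x, y, z ∈ M, the first exchange law holds: (x◁y)◁(z◁y) = (x◁z)◁(y▷z); explicitly, t•(t•x + s•y) + s•(t•z + s•y) = t•(t•x + s•z) + s•(r•y). -/
/-- The first exchange law for the `(t,s,r)`-birack structure `x ◁ y = t•x + s•y`,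
`x ▷ y = r•x` on an `R`-module `M`: `(x◁y)◁(z◁y) = (x◁z)◁(y▷z)`; explicitly,
`t•(t•x + s•y) + s•(t•z + s•y) = t•(t•x + s•z) + s•(r•y)`. -/
theorem statement5 {R M : Type*} [CommRing R] [AddCommGroup M] [Module R M]
    (t r : Rˣ) (s : R) (hs : s ^ 2 = s * ((r : R) - (t : R))) :
    let und : M → M → M := fun x y => (t : R) • x + s • y
    let ov : M → M → M := fun x y => (r : R) • x
    ∀ x y z : M, und (und x y) (und z y) = und (und x z) (ov y z) ∧
      (t : R) • ((t : R) • x + s • y) + s • ((t : R) • z + s • y)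
        = (t : R) • ((t : R) • x + s • z) + s • ((r : R) • y) := by
  intro und ov x y z
  have key : ∀ a b c : M,
      (t : R) • ((t : R) • a + s • b) + s • ((t : R) • c + s • b)
        = (t : R) • ((t : R) • a + s • c) + s • ((r : R) • b) := by
    intro a b c
    simp only [smul_add, smul_smul]
    rw [show s * (r:R) = (t:R)*s + s*s by linear_combination -hs, add_smul,
      mul_comm s (t:R)]
    abel
  exact ⟨key x y z, key x y z⟩
end

section
/- Let X = {1,2,3,4} with binary operations given by the tables (rows indexed by x, columns by y): x◁y with rows (2,4,2,4), (1,3,1,3), (4,2,4,2), (3,1,3,1), and x▷y with rows (4,2,4,2), (3,1,3,1), (2,4,2,4), (1,3,1,3). Then (X, ◁, ▷) is a framed birack: it satisfies (i) (x◁x)▷(x▷x) = (x▷x)◁(x◁x) for all x; (ii) for each x the maps y ↦ y▷x and y ↦ y◁x are bijections of X and the map S(x,y) = (y▷x, x◁y) is a bijection of X×X; and (iii) the three exchange laws (x◁y)◁(z◁y) = (x◁z)◁(y▷z), (x◁y)▷(z◁y) = (x▷z)◁(y▷z), (x▷y)▷(z▷y) = (x▷z)▷(y◁z) for all x,y,z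 ∈ X. -/
/-- We model `X = {1,2,3,4}` as `Fin 4` (the numeral `4` denotes the element `0`, so
the numerals `1, 2, 3, 4` enumerate all of `Fin 4`). Any pair of binary operations
`◁, ▷` given by the tables (rows indexed by `x`, columns by `y`)
`x◁y`: rows `(2,4,2,4), (1,3,1,3), (4,2,4,2), (3,1,3,1)` and
`x▷y`: rows `(4,2,4,2), (3,1,3,1), (2,4,2,4), (1,3,1,3)` forms a framed birack. -/
theorem statement16 (und ov : Fin 4 → Fin 4 → Fin 4)
    (hu11 : und 1 1 = 2) (hu12 : und 1 2 = 4) (hu13 : und 1 3 = 2) (hu14 : und 1 4 = 4)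
    (hu21 : und 2 1 = 1) (hu22 : und 2 2 = 3) (hu23 : und 2 3 = 1) (hu24 : und 2 4 = 3)
    (hu31 : und 3 1 = 4) (hu32 : und 3 2 = 2) (hu33 : und 3 3 = 4) (hu34 : und 3 4 = 2)
    (hu41 : und 4 1 = 3) (hu42 : und 4 2 = 1) (hu43 : und 4 3 = 3) (hu44 : und 4 4 = 1)
    (ho11 : ov 1 1 = 4) (ho12 : ov 1 2 = 2) (ho13 : ov 1 3 = 4) (ho14 : ov 1 4 = 2)
    (ho21 : ov 2 1 = 3) (ho22 : ov 2 2 = 1) (ho23 : ov 2 3 = 3) (ho24 : ov 2 4 = 1)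
    (ho31 : ov 3 1 = 2) (ho32 : ov 3 2 = 4) (ho33 : ov 3 3 = 2) (ho34 : ov 3 4 = 4)
    (ho41 : ov 4 1 = 1) (ho42 : ov 4 2 = 3) (ho43 : ov 4 3 = 1) (ho44 : ov 4 4 = 3) :
    -- (i)
    (∀ x, ov (und x x) (ov x x) = und (ov x x) (und x x)) ∧
    -- (ii)
    (∀ x, Function.Bijective (fun y => ov y x)) ∧
    (∀ x, Function.Bijective (fun y => und y x)) ∧
    Function.Bijective (fun p : Fin 4 × Fin 4 => (ov p.2 p.1, und p.1 p.2)) ∧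
    -- (iii) exchange laws
    (∀ x y z, und (und x y) (und z y) = und (und x z) (ov y z)) ∧
    (∀ x y z, ov (und x y) (und z y) = und (ov x z) (ov y z)) ∧
    (∀ x y z, ov (ov x y) (ov z y) = ov (ov x z) (und y z)) := by

  have hU : und = ![![(1:Fin 4),3,1,3],![0,2,0,2],![3,1,3,1],![2,0,2,0]] := by
    funext x y
    fin_cases x <;> fin_cases y <;>
      assumption
  have hO : ov = ![![(3:Fin 4),1,3,1],![2,0,2,0],![1,3,1,3],![0,2,0,2]] := by
    funext x y
    fin_cases x <;> fin_cases y <;>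
      assumption
  subst hU hO
  refine ⟨by decide, by decide, by decide, by decide, by decide, by decide, by decide⟩
end
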